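/- For every n ≥ 1, there is exactly one league outcome with n teams in which every team has total points exactly 2(n−1), namely the outcome in which every match is a draw. -/

import Mathlib

open Finset

inductive MatchResult : Type
  | homeWin : MatchResult
  | draw : MatchResult
  | awayWin : MatchResult
  deriving DecidableEq

instance : Fintype MatchResult where
  elems := {MatchResult.homeWin, MatchResult.draw, MatchResult.awayWin}
  complete := by
    intro x
    cases x <;> simp

/-- A league outcome: a result for each ordered pair of distinct teams
(the first component is the home team). -/
abbrev LeagueOutcome (n : ℕ) : Type :=
  {p : Fin n × Fin n // p.1 ≠ p.2} → MatchResult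

/-- Points earned by the home team. -/
def homePts : MatchResult → ℕ
  | .homeWin => 3
  | .draw => 1
  | .awayWin => 0

/-- Points earned by the away team. -/
def awayPts : MatchResult → ℕ
  | .homeWin => 0
  | .draw => 1
  | .awayWin => 3

/-- Total points of team `i`: sum over all matches of the points `i` earns in them. -/
def totalPoints {n : ℕ} (r : LeagueOutcome n) (i : Fin n) : ℕ :=
  ∑ m : {p : Fin n × Fin n // p.1 ≠ p.2},
    ((if m.val.1 = i then homePts (r m) else 0) +
     (if m.val.2 = i then awayPts (r m) else 0))

/-- Total points the other teams earn in their matches against team `i`. -/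
def oppPoints {n : ℕ} (r : LeagueOutcome n) (i : Fin n) : ℕ :=
  ∑ m : {p : Fin n × Fin n // p.1 ≠ p.2},
    ((if m.val.1 = i then awayPts (r m) else 0) +
     (if m.val.2 = i then homePts (r m) else 0))

/-- Number of matches that team `i` wins. -/
def wins {n : ℕ} (r : LeagueOutcome n) (i : Fin n) : ℕ :=
  (Finset.univ.filter (fun m : {p : Fin n × Fin n // p.1 ≠ p.2} =>
    (m.val.1 = i ∧ r m = .homeWin) ∨ (m.val.2 = i ∧ r m = .awayWin))).card

/-- Number of matches that team `i` draws. -/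
def draws {n : ℕ} (r : LeagueOutcome n) (i : Fin n) : ℕ :=
  (Finset.univ.filter (fun m : {p : Fin n × Fin n // p.1 ≠ p.2} =>
    (m.val.1 = i ∨ m.val.2 = i) ∧ r m = .draw)).card

/-- Number of matches that team `i` loses. -/
def losses {n : ℕ} (r : LeagueOutcome n) (i : Fin n) : ℕ :=
  (Finset.univ.filter (fun m : {p : Fin n × Fin n // p.1 ≠ p.2} =>
    (m.val.1 = i ∧ r m = .awayWin) ∨ (m.val.2 = i ∧ r m = .homeWin))).card


lemma tp_draw {n : ℕ} (i : Fin n) :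
    totalPoints (fun _ => MatchResult.draw : LeagueOutcome n) i = 2 * (n - 1) := by
  unfold totalPoints
  rw [← Finset.sum_subtype (p := fun p : Fin n × Fin n => p.1 ≠ p.2)
      (univ.filter (fun p : Fin n × Fin n => p.1 ≠ p.2)) (fun x => by simp)
      (fun p => (if p.1 = i then homePts .draw else 0) + (if p.2 = i then awayPts .draw else 0))]
  rw [Finset.sum_filter, Fintype.sum_prod_type]
  have key : ∀ a : Fin n,
      (∑ b : Fin n, if a ≠ b then ((if a = i then homePts .draw else 0) +
        (if b = i then awayPts .draw else 0)) else 0) = if a = i then n - 1 else 1 := by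
    intro a
    by_cases h : a = i
    · subst h
      rw [if_pos rfl]
      rw [Finset.sum_congr rfl (fun b _ => show _ = if a ≠ b then (1:ℕ) else 0 by
        by_cases hb : a = b <;> simp [hb, eq_comm, homePts, awayPts])]
      rw [Finset.sum_ite, Finset.sum_const, Finset.sum_const]
      simp [Finset.filter_ne, Finset.card_erase_of_mem]
    · rw [if_neg h]
      rw [Finset.sum_congr rfl (fun b _ => show _ = if b = i then (1:ℕ) else 0 by
        by_cases hb : b = i <;> simp [hb, h, homePts, awayPts])]
      simp [h]
  rw [Finset.sum_congr rfl (fun a _ => key a)]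
  rw [Finset.sum_ite, Finset.sum_const, Finset.sum_const]
  have h1 : (univ.filter (fun a : Fin n => a = i)).card = 1 := by
    rw [Finset.filter_eq']; simp
  have h3 := Finset.card_filter_add_card_filter_not
    (s := (univ : Finset (Fin n))) (p := fun a => a = i)
  have h2 : (univ.filter (fun a : Fin n => ¬ a = i)).card = n - 1 := by
    simp only [Finset.card_univ, Fintype.card_fin, h1] at h3
    omega
  rw [h1, h2]
  simp only [smul_eq_mul]
  omega

lemma sum_tp {n : ℕ} (r : LeagueOutcome n) :
    ∑ i, totalPoints r i =
      ∑ m : {p : Fin n × Fin n // p.1 ≠ p.2}, (homePts (r m) + awayPts (r m)) := by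
  unfold totalPoints
  rw [Finset.sum_comm]
  refine Finset.sum_congr rfl (fun m _ => ?_)
  rw [Finset.sum_add_distrib]
  simp [Finset.sum_ite_eq']

/-- for `n ≥ 1` the all-draw outcome is the unique outcome in which
every team has exactly `2(n−1)` points. -/
theorem unique_min_score_outcome (n : ℕ) (hn : 1 ≤ n) :
    (∀ i, totalPoints (fun _ => MatchResult.draw : LeagueOutcome n) i = 2 * (n - 1)) ∧
      ∀ r : LeagueOutcome n, (∀ i, totalPoints r i = 2 * (n - 1)) →
        r = fun _ => MatchResult.draw := by
  refine ⟨fun i => tp_draw i, fun r hr => ?_⟩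
  have hsum : ∑ m : {p : Fin n × Fin n // p.1 ≠ p.2}, (homePts (r m) + awayPts (r m))
      = ∑ m : {p : Fin n × Fin n // p.1 ≠ p.2}, (2:ℕ) := by
    rw [← sum_tp r]
    have : ∑ m : {p : Fin n × Fin n // p.1 ≠ p.2}, (2:ℕ) =
        ∑ m : {p : Fin n × Fin n // p.1 ≠ p.2},
          (homePts ((fun _ => MatchResult.draw : LeagueOutcome n) m) +
           awayPts ((fun _ => MatchResult.draw : LeagueOutcome n) m)) := by
      simp [homePts, awayPts]
    rw [this, ← sum_tp]
    exact Finset.sum_congr rfl (fun i _ => by rw [hr i, tp_draw i])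
  have hle : ∀ m ∈ (univ : Finset {p : Fin n × Fin n // p.1 ≠ p.2}),
      (2:ℕ) ≤ homePts (r m) + awayPts (r m) := by
    intro m _; cases r m <;> simp [homePts, awayPts]
  have := (Finset.sum_eq_sum_iff_of_le hle).mp hsum.symm
  funext m
  have h2 := (this m (Finset.mem_univ m)).symm
  cases hm : r m <;> simp [hm, homePts, awayPts] at h2 ⊢
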